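/- Let h:ℝ→ℝ be an odd increasing homeomorphism and suppose there exist 1<h₀≤h₁ such that h₀ ≤ h(t)t/H(t) ≤ h₁ for all t>0, where H(t)=∫₀^t h(s)ds. Then for all ρ ∈ [0,1] and t ≥ 0, H(ρt) ≤ ρ^{h₀} H(t), and for all ρ ≥ 1 and t ≥ 0, H(ρt) ≤ ρ^{h₁} H(t). -/
import Mathlib


open Set Real

private lemma mono_aux (H h : ℝ → ℝ) (c : ℝ)
    (hd : ∀ x, HasDerivAt H (h x) x)
    (hHpos : ∀ s > (0:ℝ), 0 < H s)
    (hle : ∀ s > (0:ℝ), c * H s ≤ h s * s) :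
    MonotoneOn (fun s => Real.log (H s) - c * Real.log s) (Ioi (0:ℝ)) := by
  have hder : ∀ x ∈ Ioi (0:ℝ), HasDerivAt (fun s => Real.log (H s) - c * Real.log s)
      (h x / H x - c * x⁻¹) x := by
    intro x hx
    have hx0 : (0:ℝ) < x := hx
    exact ((hd x).log (hHpos x hx0).ne').sub ((Real.hasDerivAt_log hx0.ne').const_mul c)
  apply monotoneOn_of_deriv_nonneg (convex_Ioi 0)
  · exact fun x hx => (hder x hx).continuousAt.continuousWithinAt
  · rw [interior_Ioi]
    exact fun x hx => (hder x hx).differentiableAt.differentiableWithinAt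
  · rw [interior_Ioi]
    intro x hx
    rw [(hder x hx).deriv]
    have hx0 : (0:ℝ) < x := hx
    have hH0 : 0 < H x := hHpos x hx0
    have : c / x ≤ h x / H x := by
      rw [div_le_div_iff₀ hx0 hH0]
      linarith [hle x hx0]
    rw [sub_nonneg, ← div_eq_mul_inv]
    exact this

private lemma mono_aux2 (H h : ℝ → ℝ) (c : ℝ)
    (hd : ∀ x, HasDerivAt H (h x) x)
    (hHpos : ∀ s > (0:ℝ), 0 < H s)
    (hle : ∀ s > (0:ℝ), h s * s ≤ c * H s) :
    MonotoneOn (fun s => c * Real.log s - Real.log (H s)) (Ioi (0:ℝ)) := by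
  have hder : ∀ x ∈ Ioi (0:ℝ), HasDerivAt (fun s => c * Real.log s - Real.log (H s))
      (c * x⁻¹ - h x / H x) x := by
    intro x hx
    have hx0 : (0:ℝ) < x := hx
    exact ((Real.hasDerivAt_log hx0.ne').const_mul c).sub ((hd x).log (hHpos x hx0).ne')
  apply monotoneOn_of_deriv_nonneg (convex_Ioi 0)
  · exact fun x hx => (hder x hx).continuousAt.continuousWithinAt
  · rw [interior_Ioi]
    exact fun x hx => (hder x hx).differentiableAt.differentiableWithinAt
  · rw [interior_Ioi]
    intro x hx
    rw [(hder x hx).deriv]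
    have hx0 : (0:ℝ) < x := hx
    have hH0 : 0 < H x := hHpos x hx0
    have : h x / H x ≤ c / x := by
      rw [div_le_div_iff₀ hH0 hx0]
      linarith [hle x hx0]
    rw [sub_nonneg, ← div_eq_mul_inv]
    exact this

theorem stmt7 (h H : ℝ → ℝ) (h₀ h₁ : ℝ)
    (hodd : ∀ t, h (-t) = -h t)
    (hmono : StrictMono h)
    (hcont : Continuous h)
    (hsurj : Function.Surjective h)
    (hH : ∀ t : ℝ, H t = ∫ s in (0:ℝ)..t, h s)
    (hh0 : 1 < h₀) (hh01 : h₀ ≤ h₁)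
    (hel : ∀ t > 0, h₀ ≤ h t * t / H t ∧ h t * t / H t ≤ h₁) :
    (∀ ρ ∈ Icc (0:ℝ) 1, ∀ t ≥ (0:ℝ), H (ρ * t) ≤ ρ ^ h₀ * H t) ∧
      ∀ ρ ≥ (1:ℝ), ∀ t ≥ (0:ℝ), H (ρ * t) ≤ ρ ^ h₁ * H t := by
  have h0 : h 0 = 0 := by have := hodd 0; simp at this; linarith
  have hd : ∀ x, HasDerivAt H (h x) x := by
    intro x
    have : HasDerivAt (fun t => ∫ s in (0:ℝ)..t, h s) (h x) x :=
      intervalIntegral.integral_hasDerivAt_right (hcont.intervalIntegrable 0 x)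
        (hcont.stronglyMeasurableAtFilter _ _) hcont.continuousAt
    have hfun : H = fun t => ∫ s in (0:ℝ)..t, h s := funext hH
    rw [hfun]; exact this
  have hH0 : H 0 = 0 := by rw [hH]; simp
  have hHpos : ∀ s > (0:ℝ), 0 < H s := by
    intro s hs
    rw [hH]
    apply intervalIntegral.intervalIntegral_pos_of_pos_on (hcont.intervalIntegrable 0 s) _ hs
    intro x hx
    have := hmono hx.1
    rwa [h0] at this
  -- the key log inequality
  have key : ∀ c : ℝ, (∀ s > (0:ℝ), c * H s ≤ h s * s) →
      ∀ ρ > (0:ℝ), ρ ≤ 1 → ∀ t > (0:ℝ), H (ρ * t) ≤ ρ ^ c * H t := by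
    intro c hc ρ hρ hρ1 t ht
    have hρt : 0 < ρ * t := mul_pos hρ ht
    have hmon := mono_aux H h c hd hHpos hc
    have hle : ρ * t ≤ t := by nlinarith
    have := hmon (mem_Ioi.2 hρt) (mem_Ioi.2 ht) hle
    simp only at this
    have hlog : Real.log (H (ρ * t)) ≤ c * Real.log ρ + Real.log (H t) := by
      rw [Real.log_mul hρ.ne' ht.ne'] at this
      ring_nf at this ⊢
      linarith
    have h1 : H (ρ * t) = Real.exp (Real.log (H (ρ * t))) :=
      (Real.exp_log (hHpos _ hρt)).symm
    have h2 : ρ ^ c * H t = Real.exp (c * Real.log ρ + Real.log (H t)) := by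
      rw [Real.exp_add, Real.exp_log (hHpos _ ht), Real.rpow_def_of_pos hρ, mul_comm c]
    rw [h1, h2]
    exact Real.exp_le_exp.2 hlog
  have key2 : ∀ c : ℝ, (∀ s > (0:ℝ), h s * s ≤ c * H s) →
      ∀ ρ ≥ (1:ℝ), ∀ t > (0:ℝ), H (ρ * t) ≤ ρ ^ c * H t := by
    intro c hc ρ hρ t ht
    have hρ0 : (0:ℝ) < ρ := lt_of_lt_of_le one_pos hρ
    have hρt : 0 < ρ * t := mul_pos hρ0 ht
    have hmon := mono_aux2 H h c hd hHpos hc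
    have hle : t ≤ ρ * t := by nlinarith
    have := hmon (mem_Ioi.2 ht) (mem_Ioi.2 hρt) hle
    simp only at this
    have hlog : Real.log (H (ρ * t)) ≤ c * Real.log ρ + Real.log (H t) := by
      rw [Real.log_mul hρ0.ne' ht.ne'] at this
      ring_nf at this ⊢
      linarith
    have h1 : H (ρ * t) = Real.exp (Real.log (H (ρ * t))) :=
      (Real.exp_log (hHpos _ hρt)).symm
    have h2 : ρ ^ c * H t = Real.exp (c * Real.log ρ + Real.log (H t)) := by
      rw [Real.exp_add, Real.exp_log (hHpos _ ht), Real.rpow_def_of_pos hρ0, mul_comm c]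
    rw [h1, h2]
    exact Real.exp_le_exp.2 hlog
  constructor
  · rintro ρ ⟨hρ0, hρ1⟩ t ht
    rcases eq_or_lt_of_le ht with ht0 | ht0
    · rw [← ht0, mul_zero, hH0, mul_zero]
    rcases eq_or_lt_of_le hρ0 with hρ0' | hρ0'
    · rw [← hρ0', zero_mul, hH0, Real.zero_rpow (by positivity : h₀ ≠ 0), zero_mul]
    · apply key h₀ _ ρ hρ0' hρ1 t ht0
      intro s hs
      have := (hel s hs).1
      have hHs := hHpos s hs
      rw [le_div_iff₀ hHs] at this
      linarith
  · intro ρ hρ t ht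
    rcases eq_or_lt_of_le ht with ht0 | ht0
    · rw [← ht0, mul_zero, hH0, mul_zero]
    apply key2 h₁ _ ρ hρ t ht0
    intro s hs
    have := (hel s hs).2
    have hHs := hHpos s hs
    rw [div_le_iff₀ hHs] at this
    linarith
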